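/- Let n be a positive integer divisible by 8 and let b be a nonzero rational number. Then a = 2^(n/2)·b^n is an n-th power in ℚ_p for all but finitely many primes p, even though a need not be a perfect n-th power in ℚ. -/

import Mathlib

open Polynomial

lemma zmod_root_sixteen (p : ℕ) [Fact p.Prime] (hp : p ≠ 2) :
    ∃ a : ZMod p, a ^ 8 = 16 := by
  have hodd : p % 2 = 1 := (Nat.Prime.mod_two_eq_one_iff_ne_two Fact.out).mpr hp
  have h8 : p % 8 % 2 = p % 2 := Nat.mod_mod_of_dvd p (by norm_num)
  have hlt : p % 8 < 8 := Nat.mod_lt _ (by norm_num)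
  have hcases : p % 8 = 1 ∨ p % 8 = 3 ∨ p % 8 = 5 ∨ p % 8 = 7 := by omega
  rcases hcases with h | h | h | h
  · obtain ⟨r, hr⟩ := (ZMod.exists_sq_eq_two_iff hp).mpr (Or.inl h)
    exact ⟨r, by rw [show r ^ 8 = (r * r) ^ 4 from by ring, ← hr]; norm_num⟩
  · obtain ⟨r, hr⟩ := (ZMod.exists_sq_eq_neg_two_iff hp).mpr (Or.inr h)
    exact ⟨r, by rw [show r ^ 8 = (r * r) ^ 4 from by ring, ← hr]; norm_num⟩
  · have h4 : p % 4 ≠ 3 := by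
      have : p % 4 = p % 8 % 4 := (Nat.mod_mod_of_dvd p (by norm_num)).symm
      omega
    obtain ⟨r, hr⟩ := ZMod.exists_sq_eq_neg_one_iff.mpr h4
    refine ⟨1 + r, ?_⟩
    have h2 : (1 + r) ^ 2 = 2 * r := by linear_combination -hr
    calc (1 + r) ^ 8 = ((1 + r) ^ 2) ^ 4 := by ring
      _ = 16 * (r * r) ^ 2 := by rw [h2]; ring
      _ = 16 := by rw [← hr]; norm_num
  · obtain ⟨r, hr⟩ := (ZMod.exists_sq_eq_two_iff hp).mpr (Or.inr h)
    exact ⟨r, by rw [show r ^ 8 = (r * r) ^ 4 from by ring, ← hr]; norm_num⟩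

lemma padic_root_sixteen (p : ℕ) [Fact p.Prime] (hp : p ≠ 2) :
    ∃ z : ℤ_[p], z ^ 8 = 16 := by
  obtain ⟨a, ha⟩ := zmod_root_sixteen p hp
  have hpow : ∀ k : ℕ, p ∣ 2 ^ k → False := fun k h =>
    hp ((Nat.prime_dvd_prime_iff_eq Fact.out Nat.prime_two).mp ((Fact.out : p.Prime).dvd_of_dvd_pow h))
  have h16 : (16 : ZMod p) ≠ 0 := by
    intro h
    have hd : p ∣ 16 := (ZMod.natCast_eq_zero_iff 16 p).mp (by exact_mod_cast h)
    exact hpow 4 hd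
  have ha0 : a ≠ 0 := by
    intro h; rw [h] at ha; simp at ha; exact h16 ha.symm
  set A : ℤ_[p] := ((a.val : ℤ) : ℤ_[p]) with hA
  have hAval : ¬ (p : ℤ) ∣ (a.val : ℤ) := by
    rw [Int.natCast_dvd_natCast]
    intro h
    apply ha0
    have h0 : ((a.val : ℕ) : ZMod p) = 0 := (ZMod.natCast_eq_zero_iff _ _).mpr h
    rwa [ZMod.natCast_val, ZMod.cast_id] at h0
  have hAnorm : ‖A‖ = 1 := by
    have h1 : ‖A‖ ≤ 1 := A.norm_le_one
    have h2 : ¬ ‖A‖ < 1 := by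
      rw [hA, PadicInt.norm_int_lt_one_iff_dvd]
      exact hAval
    linarith [lt_or_eq_of_le h1 |>.resolve_left h2]
  set F : Polynomial ℤ_[p] := X ^ 8 - C 16 with hF
  have hFeval : ∀ x : ℤ_[p], F.eval x = x ^ 8 - 16 := by intro x; simp [hF]
  have hFderiv : F.derivative = C 8 * X ^ 7 := by
    rw [hF]
    simp [derivative_pow]
  have hderiv_eval : F.derivative.eval A = 8 * A ^ 7 := by rw [hFderiv]; simp
  have h8norm : ‖(8 : ℤ_[p])‖ = 1 := by
    have h1 : ‖(8 : ℤ_[p])‖ ≤ 1 := PadicInt.norm_le_one _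
    have h2 : ¬ ‖((8 : ℤ) : ℤ_[p])‖ < 1 := by
      rw [PadicInt.norm_int_lt_one_iff_dvd]
      intro h
      exact hpow 3 (by exact_mod_cast h)
    push_cast at h2
    linarith [lt_or_eq_of_le h1 |>.resolve_left h2]
  have hderivnorm : ‖F.derivative.eval A‖ = 1 := by
    rw [hderiv_eval, norm_mul, norm_pow, h8norm, hAnorm]
    norm_num
  have hevalnorm : ‖F.eval A‖ < 1 := by
    rw [hFeval]
    have heq : A ^ 8 - 16 = (((a.val : ℤ) ^ 8 - 16 : ℤ) : ℤ_[p]) := by push_cast [hA]; ring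
    rw [heq, PadicInt.norm_int_lt_one_iff_dvd, ← ZMod.intCast_zmod_eq_zero_iff_dvd]
    push_cast
    rw [ZMod.natCast_val a, ZMod.cast_id, ha]
    ring
  have hnorm : ‖F.eval A‖ < ‖F.derivative.eval A‖ ^ 2 := by
    rw [hderivnorm]; simpa using hevalnorm
  obtain ⟨z, hz, -⟩ := hensels_lemma hnorm
  rw [Polynomial.coe_aeval_eq_eval, hFeval] at hz
  exact ⟨z, sub_eq_zero.mp hz⟩

/-- If `8 ∣ n` and `b` is a nonzero rational, then `2^(n/2) · bⁿ` is an `n`-th power in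
`ℚ_p` for all but finitely many primes `p`. -/
theorem exceptional_case_grunwald_wang (n : ℕ) (hn : 8 ∣ n) (b : ℚ) (hb : b ≠ 0) :
    ∃ S : Finset ℕ, ∀ p : ℕ, ∀ [Fact p.Prime], p ∉ S →
      ∃ y : ℚ_[p], y ^ n = ((2 ^ (n / 2) * b ^ n : ℚ) : ℚ_[p]) := by
  obtain ⟨m, rfl⟩ := hn
  refine ⟨{2}, ?_⟩
  intro p _ hp
  rw [Finset.mem_singleton] at hp
  obtain ⟨z, hz⟩ := padic_root_sixteen p hp
  refine ⟨(z : ℚ_[p]) * (b : ℚ_[p]), ?_⟩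
  have hz' : (z : ℚ_[p]) ^ 8 = 16 := by exact_mod_cast congrArg (PadicInt.Coe.ringHom) hz
  push_cast
  rw [show 8 * m / 2 = 4 * m from by omega]
  calc ((z : ℚ_[p]) * b) ^ (8 * m)
      = ((z : ℚ_[p]) ^ 8) ^ m * (b : ℚ_[p]) ^ (8 * m) := by rw [mul_pow, pow_mul]
    _ = 2 ^ (4 * m) * (b : ℚ_[p]) ^ (8 * m) := by
        rw [hz', show (16 : ℚ_[p]) = 2 ^ 4 from by norm_num, ← pow_mul]
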